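/- For every finite connected graph G with at least two vertices, A(G) ≤ Dim(G), where A(G) is the minimum length of a maximal geodesic of G. -/

import Mathlib

/-- Set of vertices distinguishing `u` and `v`. -/
noncomputable def distinguishers {V : Type*} (G : SimpleGraph V) (u v : V) : Set V :=
  {w | G.dist u w ≠ G.dist v w}

/-- `Dim(G)`: the largest `k` such that every pair of distinct vertices is
distinguished by at least `k` vertices. -/
noncomputable def metricDim {V : Type*} (G : SimpleGraph V) : ℕ :=
  sSup {k | ∀ u v : V, u ≠ v → k ≤ (distinguishers G u v).ncard}

/-- The boundary `∂N(v,m)`: vertices at distance `m` from `v` having a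
neighbor outside `N(v,m)`. -/
def bdry {V : Type*} (G : SimpleGraph V) (v : V) (m : ℕ) : Set V :=
  {w | G.dist v w = m ∧ ∃ x, G.Adj w x ∧ m < G.dist v x}

/-- `v` and `v'` are distinct and have equal (nonempty) `m`-boundary. -/
def eqBdry {V : Type*} (G : SimpleGraph V) (v v' : V) (m : ℕ) : Prop :=
  v ≠ v' ∧ bdry G v m = bdry G v' m ∧ (bdry G v m).Nonempty

noncomputable def etaM {V : Type*} (G : SimpleGraph V) (v v' : V) (m : ℕ) : ℕ :=
  {w | (G.dist v w ≤ m ∨ G.dist v' w ≤ m) ∧ G.dist v w ≠ G.dist v' w}.ncard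

noncomputable def etaG {V : Type*} (G : SimpleGraph V) : ℕ :=
  sInf {n | ∃ (m : ℕ) (v v' : V), eqBdry G v v' m ∧ n = etaM G v v' m}

/-- the diameter of `G`. -/
noncomputable def gdiam {V : Type*} (G : SimpleGraph V) : ℕ :=
  sSup {n | ∃ u v : V, G.dist u v = n}

/-- Reachability in `G` avoiding the vertex set `S`. -/
def ReachOff {V : Type*} (G : SimpleGraph V) (S : Set V) (a b : V) : Prop :=
  ∃ p : G.Walk a b, ∀ x ∈ p.support, x ∉ S

/-- `S` is a common separating subset of the `m`-spheres of `v` and `v'`. -/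
def CommonSepSubset {V : Type*} (G : SimpleGraph V) (v v' : V) (m : ℕ) (S : Set V) : Prop :=
  S ⊆ {w | G.dist v w = m} ∩ {w | G.dist v' w = m} ∧
  (∃ a b : V, a ∉ S ∧ b ∉ S ∧ ¬ ReachOff G S a b) ∧
  (∃ w : V, w ∉ S ∧ ¬ ReachOff G S w v ∧ ¬ ReachOff G S w v')

/-- `(v,v') ∈ 𝒫ₘ(G)`. -/
def memPm {V : Type*} (G : SimpleGraph V) (v v' : V) (m : ℕ) : Prop :=
  v ≠ v' ∧ ∃ S : Set V, CommonSepSubset G v v' m S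

/-- `Sₘ(v,v')`: the union of all common separating subsets of the `m`-spheres. -/
def SmUnion {V : Type*} (G : SimpleGraph V) (v v' : V) (m : ℕ) : Set V :=
  {x | ∃ S : Set V, CommonSepSubset G v v' m S ∧ x ∈ S}

/-- The union of the components of `G \ Sₘ(v,v')` containing neither `v` nor `v'`. -/
def avoidComps {V : Type*} (G : SimpleGraph V) (v v' : V) (m : ℕ) : Set V :=
  {w | w ∉ SmUnion G v v' m ∧ ¬ ReachOff G (SmUnion G v v' m) w v ∧
    ¬ ReachOff G (SmUnion G v v' m) w v'}

noncomputable def muM {V : Type*} (G : SimpleGraph V) (v v' : V) (m : ℕ) : ℕ :=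
  {w | w ∉ avoidComps G v v' m ∧ G.dist v w ≠ G.dist v' w}.ncard

noncomputable def muG {V : Type*} (G : SimpleGraph V) : ℕ :=
  sInf {n | ∃ (m : ℕ) (v v' : V), memPm G v v' m ∧ n = muM G v v' m}

/-- degree as the cardinality of the neighbor set. -/
noncomputable def ndeg {V : Type*} (G : SimpleGraph V) (v : V) : ℕ := (G.neighborSet v).ncard

def IsMajor {V : Type*} (G : SimpleGraph V) (v : V) : Prop := 3 ≤ ndeg G v

/-- `u` is a terminal vertex of the major vertex `w`. -/
def IsTerminalOf {V : Type*} (G : SimpleGraph V) (u w : V) : Prop :=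
  ndeg G u = 1 ∧ IsMajor G w ∧
    ∀ w', IsMajor G w' → w' ≠ w → G.dist u w < G.dist u w'

/-- `G` is a V-graph. -/
def IsVGraph {V : Type*} (G : SimpleGraph V) : Prop :=
  ∃ w, IsMajor G w ∧ {u | IsTerminalOf G u w}.ncard = 2 ∧
    ∀ u, IsTerminalOf G u w → G.Adj u w

/-- `G` is a block graph: connected and every biconnected (2-connected)
set of vertices induces a clique. -/
def IsBlockGraph {V : Type*} (G : SimpleGraph V) : Prop :=
  G.Connected ∧ ∀ B : Set V, 3 ≤ B.ncard → (G.induce B).Connected →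
    (∀ x ∈ B, (G.induce (B \ {x})).Connected) → G.IsClique B

/-- `G` is tagged. -/
def Tagged {V : Type*} (G : SimpleGraph V) : Prop :=
  ∃ K : Set V, G.IsClique K ∧ (∀ K' : Set V, K ⊆ K' → G.IsClique K' → K' = K) ∧
    3 ≤ K.ncard ∧ ∃ u ∈ K, ∃ v ∈ K, u ≠ v ∧
      ndeg G u = K.ncard - 1 ∧ ndeg G v = K.ncard - 1

/-- `G` is neither a complete graph nor a path graph. -/
def NonElementary {V : Type*} (G : SimpleGraph V) : Prop :=
  G ≠ ⊤ ∧ ∀ n : ℕ, IsEmpty (G ≃g SimpleGraph.pathGraph n)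

/-- `p` is a maximal geodesic: a shortest path not contained in a longer one,
i.e. not extendable to a longer geodesic at either endpoint. -/
def IsMaxGeodesic {V : Type*} (G : SimpleGraph V) {u v : V} (p : G.Walk u v) : Prop :=
  p.length = G.dist u v ∧
    (¬ ∃ x : V, G.Adj x u ∧ G.dist x v = p.length + 1) ∧
    (¬ ∃ y : V, G.Adj v y ∧ G.dist u y = p.length + 1)

/-- `A(G)`: the minimum length of a maximal geodesic in `G`. -/
noncomputable def AG {V : Type*} (G : SimpleGraph V) : ℕ :=
  sInf {n | ∃ (u v : V) (p : G.Walk u v), IsMaxGeodesic G p ∧ p.length = n}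


open SimpleGraph in
/-- On a geodesic walk, every support vertex splits the distance, and is
recovered as `getVert` of its distance from the start. -/
lemma geod_support_fact {V : Type*} {G : SimpleGraph V} (hG : G.Connected)
    {a b : V} (p : G.Walk a b) (hp : p.length = G.dist a b) {w : V}
    (hw : w ∈ p.support) :
    G.dist a w + G.dist w b = G.dist a b ∧ p.getVert (G.dist a w) = w := by
  obtain ⟨q, r, rfl⟩ := SimpleGraph.Walk.mem_support_iff_exists_append.mp hw
  have hq : G.dist a w ≤ q.length := SimpleGraph.dist_le q
  have hr : G.dist w b ≤ r.length := SimpleGraph.dist_le r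
  have htr : G.dist a b ≤ G.dist a w + G.dist w b := hG.dist_triangle
  have hlen : q.length + r.length = G.dist a b := by
    simpa [SimpleGraph.Walk.length_append] using hp
  have h1 : G.dist a w = q.length := by omega
  refine ⟨by omega, ?_⟩
  rw [SimpleGraph.Walk.getVert_append, h1]
  simp

lemma AG_le_ncard {V : Type*} [Fintype V] (G : SimpleGraph V) (hG : G.Connected)
    (u v : V) (huv : u ≠ v) : AG G ≤ (distinguishers G u v).ncard := by
  classical
  set k := G.dist u v with hkdef
  have hk1 : 1 ≤ k := hG.pos_dist_of_ne huv
  -- choose a pair (a,b) maximizing the length of geodesics through u,v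
  set f : V × V → ℕ := fun x =>
    if G.dist x.1 x.2 = G.dist x.1 u + k + G.dist v x.2 then G.dist x.1 x.2 else 0
    with hfdef
  have hne : (Finset.univ : Finset (V × V)).Nonempty := ⟨(u, v), Finset.mem_univ _⟩
  obtain ⟨ab, -, hmax⟩ := Finset.exists_max_image Finset.univ f hne
  obtain ⟨a, b⟩ := ab
  have hfu : f (u, v) = k := by simp [hfdef, SimpleGraph.dist_self, ← hkdef]
  have hub0 : k ≤ f (a, b) := hfu ▸ hmax (u, v) (Finset.mem_univ _)
  have hP : G.dist a b = G.dist a u + k + G.dist v b := by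
    by_contra h
    simp only [hfdef, if_neg h] at hub0
    omega
  have hfab : f (a, b) = G.dist a b := by simp [hfdef, hP]
  have hav : G.dist a v = G.dist a u + k := by
    have h1 : G.dist a v ≤ G.dist a u + k := hG.dist_triangle
    have h2 : G.dist a b ≤ G.dist a v + G.dist v b := hG.dist_triangle
    omega
  have hubb : G.dist u b = k + G.dist v b := by
    have h1 : G.dist u b ≤ k + G.dist v b := hG.dist_triangle
    have h2 : G.dist a b ≤ G.dist a u + G.dist u b := hG.dist_triangle
    omega
  -- build the walk
  obtain ⟨pa, hpa⟩ := hG.exists_walk_length_eq_dist a u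
  obtain ⟨pq, hpq⟩ := hG.exists_walk_length_eq_dist u v
  obtain ⟨pb, hpb⟩ := hG.exists_walk_length_eq_dist v b
  set p : G.Walk a b := pa.append (pq.append pb) with hpdef
  have hplen : p.length = G.dist a b := by
    simp [hpdef, SimpleGraph.Walk.length_append, hpa, hpq, hpb]
    omega
  -- p is a maximal geodesic
  have hmaxgeo : IsMaxGeodesic G p := by
    refine ⟨hplen, ?_, ?_⟩
    · rintro ⟨x, hadj, hdx⟩
      have hxa : G.dist x a = 1 := SimpleGraph.dist_eq_one_iff_adj.mpr hadj
      have h1 : G.dist x u ≤ G.dist x a + G.dist a u := hG.dist_triangle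
      have h2 : G.dist x b ≤ G.dist x u + G.dist u b := hG.dist_triangle
      have hPx : G.dist x b = G.dist x u + k + G.dist v b := by omega
      have hfx : f (x, b) = G.dist x b := by simp [hfdef, hPx]
      have := hmax (x, b) (Finset.mem_univ _)
      omega
    · rintro ⟨y, hadj, hdy⟩
      have hby : G.dist b y = 1 := SimpleGraph.dist_eq_one_iff_adj.mpr hadj
      have h1 : G.dist v y ≤ G.dist v b + G.dist b y := hG.dist_triangle
      have h2 : G.dist a y ≤ G.dist a v + G.dist v y := hG.dist_triangle
      have hPy : G.dist a y = G.dist a u + k + G.dist v y := by omega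
      have hfy : f (a, y) = G.dist a y := by simp [hfdef, hPy]
      have := hmax (a, y) (Finset.mem_univ _)
      omega
  -- counting
  have hpath : p.IsPath := p.isPath_of_length_eq_dist hplen
  set S : Finset V := p.support.toFinset with hSdef
  have hScard : S.card = p.length + 1 := by
    rw [hSdef, List.toFinset_card_of_nodup hpath.support_nodup,
      SimpleGraph.Walk.length_support]
  have hfact : ∀ w ∈ p.support,
      G.dist a w + G.dist w b = G.dist a b ∧ p.getVert (G.dist a w) = w :=
    fun w hw => geod_support_fact hG p hplen hw
  -- any non-distinguishing support vertex has a fixed distance from a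
  have hbad : ∀ w ∈ p.support, G.dist u w = G.dist v w →
      2 * G.dist a w = 2 * G.dist a u + k := by
    intro w hw heq
    have hcuw : G.dist u w = G.dist w u := SimpleGraph.dist_comm
    have hcvw : G.dist v w = G.dist w v := SimpleGraph.dist_comm
    rw [SimpleGraph.Walk.mem_support_append_iff] at hw
    rcases hw with hw | hw
    · have h1 := (geod_support_fact hG pa hpa hw).1
      have h2 : G.dist a v ≤ G.dist a w + G.dist w v := hG.dist_triangle
      omega
    · rw [SimpleGraph.Walk.mem_support_append_iff] at hw
      rcases hw with hw | hw
      · have h1 := (geod_support_fact hG pq hpq hw).1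
        have h2 : G.dist a v ≤ G.dist a w + G.dist w v := hG.dist_triangle
        have h3 : G.dist a w ≤ G.dist a u + G.dist u w := hG.dist_triangle
        omega
      · have h1 := (geod_support_fact hG pb hpb hw).1
        have h2 : G.dist u b ≤ G.dist u w + G.dist w b := hG.dist_triangle
        omega
  have huniq : ∀ w ∈ p.support, ∀ w' ∈ p.support,
      G.dist u w = G.dist v w → G.dist u w' = G.dist v w' → w = w' := by
    intro w hw w' hw' h h'
    have e1 := hbad w hw h
    have e2 := hbad w' hw' h'
    have e3 : G.dist a w = G.dist a w' := by omega
    have g1 := (hfact w hw).2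
    have g2 := (hfact w' hw').2
    rw [← g1, ← g2, e3]
  have hfin : (distinguishers G u v).Finite := Set.toFinite _
  have hmain : p.length ≤ (distinguishers G u v).ncard := by
    by_cases hex : ∃ w ∈ p.support, G.dist u w = G.dist v w
    · obtain ⟨w0, hw0, hw0eq⟩ := hex
      have hsub : ↑(S.erase w0) ⊆ distinguishers G u v := by
        intro w hw
        rw [Finset.coe_erase] at hw
        obtain ⟨hwS, hwne⟩ := hw
        rw [hSdef, Finset.mem_coe, List.mem_toFinset] at hwS
        intro hcon
        exact hwne (huniq w hwS w0 hw0 hcon hw0eq)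
      have hc : (S.erase w0).card = p.length := by
        rw [Finset.card_erase_of_mem (by rw [hSdef, List.mem_toFinset]; exact hw0),
          hScard]
        omega
      calc p.length = ((S.erase w0 : Finset V) : Set V).ncard := by
            rw [Set.ncard_coe_finset, hc]
        _ ≤ (distinguishers G u v).ncard := Set.ncard_le_ncard hsub hfin
    · push_neg at hex
      have hsub : ↑S ⊆ distinguishers G u v := by
        intro w hw
        rw [hSdef, Finset.mem_coe, List.mem_toFinset] at hw
        exact hex w hw
      calc p.length ≤ (S : Set V).ncard := by rw [Set.ncard_coe_finset, hScard]; omega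
        _ ≤ (distinguishers G u v).ncard := Set.ncard_le_ncard hsub hfin
  have hAG : AG G ≤ p.length := Nat.sInf_le ⟨a, b, p, hmaxgeo, rfl⟩
  omega

theorem stmt8 {V : Type*} [Fintype V] (G : SimpleGraph V) (hG : G.Connected)
    (hV : 1 < Fintype.card V) :
    AG G ≤ metricDim G := by
  classical
  obtain ⟨u0, v0, h0⟩ := Fintype.exists_pair_of_one_lt_card hV
  have hbdd : BddAbove {k | ∀ u v : V, u ≠ v → k ≤ (distinguishers G u v).ncard} := by
    refine ⟨Fintype.card V, fun k hk => ?_⟩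
    refine le_trans (hk u0 v0 h0) ?_
    calc (distinguishers G u0 v0).ncard ≤ (Set.univ : Set V).ncard :=
          Set.ncard_le_ncard (Set.subset_univ _) Set.finite_univ
      _ = Fintype.card V := by rw [Set.ncard_univ, Nat.card_eq_fintype_card]
  exact le_csSup hbdd (fun u v huv => AG_le_ncard G hG u v huv)
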